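/- All maximal consistent subsets of the formulas of the theory are extension bases: if M ⊆ {form d | d : ι}, M ∪ SPO is satisfiable, and for every d : ι with form d ∉ M the theory M ∪ {form d} ∪ SPO is unsatisfiable, then there exists a linear order e on ι with B(e) = M. (Claim 'Obviously, all maximal consistent subsets of form(T) are extension bases'.) -/

import Mathlib

open FirstOrder Language

namespace Brevis

/-- The base language with a single binary relation symbol `R`. -/
def baseLang : Language where
  Functions := fun _ => Empty
  Relations := fun n => match n with
    | 2 => Unit
    | _ => Empty

/-- The binary relation symbol `R` of `baseLang`. -/
def Rsym : baseLang.Relations 2 := Unit.unit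

/-- The base language with a binary relation symbol `R` and one 0-ary relation symbol `P`. -/
def baseLangP : Language where
  Functions := fun _ => Empty
  Relations := fun n => match n with
    | 0 => Unit
    | 2 => Unit
    | _ => Empty

/-- The binary relation symbol `R` of `baseLangP`. -/
def RsymP : baseLangP.Relations 2 := Unit.unit

/-- The 0-ary relation symbol `P` of `baseLangP`. -/
def Psym : baseLangP.Relations 0 := Unit.unit

/-- The atomic sentence `p` given by the propositional symbol `P`. -/
def pSent (ι : Type) : (baseLangP[[ι]]).Sentence :=
  Relations.formula (Sum.inl Psym) ![]

variable (L₀ : FirstOrder.Language.{0, 0}) (R : L₀.Relations 2) (ι : Type) [Fintype ι]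

/-- The atomic sentence `d < d'`, i.e. `R (c_d) (c_d')`. -/
def ltSent (d d' : ι) : (L₀[[ι]]).Sentence :=
  Relations.boundedFormula₂ (Sum.inl R) (L₀.con d).term (L₀.con d').term

/-- The theory `SPO` asserting that `R` is a strict partial order (irreflexive and transitive). -/
def spo : (L₀[[ι]]).Theory :=
  {Relations.irreflexive (Sum.inl R), Relations.transitive (Sum.inl R)}

/-- A set of sentences is consistent iff together with `SPO` it is satisfiable. -/
def Consistent (S : (L₀[[ι]]).Theory) : Prop :=
  Theory.IsSatisfiable (S ∪ spo L₀ R ι)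

open scoped Classical in
/-- The extension base `B(e)` determined by the linear order `e` on the names. -/
noncomputable def base (e : LinearOrder ι) (form : ι → (L₀[[ι]]).Sentence) :
    (L₀[[ι]]).Theory :=
  letI := e
  (Finset.univ.sort (· ≤ · : ι → ι → Prop)).foldl
    (fun B d => if Consistent L₀ R ι (B ∪ {form d}) then B ∪ {form d} else B) ∅

/-- The deductive closure (modulo `SPO`) of a set of sentences:
all sentences satisfied in every model of `S ∪ SPO`. -/
def closure (S : (L₀[[ι]]).Theory) : Set (L₀[[ι]]).Sentence :=
  {φ | (S ∪ spo L₀ R ι) ⊨ᵇ φ}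

/-- The extension `E(e)` generated by the linear order `e`. -/
noncomputable def extension (e : LinearOrder ι) (form : ι → (L₀[[ι]]).Sentence) :
    Set (L₀[[ι]]).Sentence :=
  closure L₀ R ι (base L₀ R ι e form)

/-- A strict partial order `p` on the names is compatible with `S` iff
`S ∪ SPO ∪ {d < d' | p d d'} ∪ {¬ (d < d') | ¬ p d d'}` is satisfiable. -/
def Compatible (p : ι → ι → Prop) (S : (L₀[[ι]]).Theory) : Prop :=
  Theory.IsSatisfiable
    (S ∪ spo L₀ R ι ∪ {φ | ∃ d d', p d d' ∧ φ = ltSent L₀ R ι d d'} ∪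
      {φ | ∃ d d', ¬ p d d' ∧ φ = ∼(ltSent L₀ R ι d d')})

/-- `Exts form S`: the set of extensions `E(e)` where `e` is a linear order extending some
strict partial order compatible with `S`. -/
def Exts (form : ι → (L₀[[ι]]).Sentence) (S : (L₀[[ι]]).Theory) :
    Set (Set (L₀[[ι]]).Sentence) :=
  {E | ∃ (e : LinearOrder ι) (p : ι → ι → Prop), IsStrictOrder ι p ∧
    Compatible L₀ R ι p S ∧ (∀ d d', p d d' → e.lt d d') ∧ E = extension L₀ R ι e form}

/-- The operator `C`. -/
def C (form : ι → (L₀[[ι]]).Sentence) (S : (L₀[[ι]]).Theory) : (L₀[[ι]]).Theory :=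
  ⋂₀ Exts L₀ R ι form S

/-- The least fixed point of `C` (Knaster–Tarski): the set of accepted conclusions. -/
def lfpC (form : ι → (L₀[[ι]]).Sentence) : (L₀[[ι]]).Theory :=
  sInf {S | C L₀ R ι form S ⊆ S}


/-- All maximal consistent subsets of the formulas of the theory are extension bases. -/
theorem maximal_consistent_is_base (ι : Type) [Fintype ι]
    (form : ι → (baseLang[[ι]]).Sentence) (M : (baseLang[[ι]]).Theory)
    (hsub : M ⊆ Set.range form)
    (hcons : Theory.IsSatisfiable (M ∪ spo baseLang Rsym ι))
    (hmax : ∀ d : ι, form d ∉ M →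
      ¬ Theory.IsSatisfiable (M ∪ {form d} ∪ spo baseLang Rsym ι)) :

    ∃ e : LinearOrder ι, base baseLang Rsym ι e form = M := by
  classical
  set f : ι → Fin 2 ×ₗ Fin (Fintype.card ι) :=
    fun d => toLex (if form d ∈ M then 0 else 1, Fintype.equivFin ι d) with hfdef
  have hf : Function.Injective f := by
    intro a b h
    have h2 := congrArg (fun x => (ofLex x).2) h
    exact (Fintype.equivFin ι).injective h2
  let e : LinearOrder ι := LinearOrder.lift' f hf
  refine ⟨e, ?_⟩
  letI := e
  set step : (baseLang[[ι]]).Theory → ι → (baseLang[[ι]]).Theory :=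
    fun B d => if Consistent baseLang Rsym ι (B ∪ {form d}) then B ∪ {form d} else B
    with hstep
  have key : ∀ (l : List ι) (B : (baseLang[[ι]]).Theory),
      B ⊆ M → M ⊆ B ∪ (form '' {d | d ∈ l}) →
      l.Pairwise (fun a b => form b ∈ M → form a ∈ M) →
      l.foldl step B = M := by
    intro l
    induction l with
    | nil =>
      intro B h1 h2 _
      simp only [List.foldl_nil]
      refine le_antisymm h1 ?_
      intro x hx
      rcases h2 hx with h | h
      · exact h
      · simp at h
    | cons d l ih =>
      intro B hB hcov hpair
      rw [List.pairwise_cons] at hpair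
      obtain ⟨hd, htail⟩ := hpair
      simp only [List.foldl_cons]
      by_cases hdM : form d ∈ M
      · have hcons' : Consistent baseLang Rsym ι (B ∪ {form d}) := by
          refine hcons.mono ?_
          apply Set.union_subset_union_left
          rw [Set.union_subset_iff]
          exact ⟨hB, by simpa using hdM⟩
        rw [hstep]
        simp only [if_pos hcons']
        apply ih
        · rw [Set.union_subset_iff]
          exact ⟨hB, by simpa using hdM⟩
        · intro x hx
          rcases hcov hx with h | h
          · exact Or.inl (Or.inl h)
          · obtain ⟨b, hb, rfl⟩ := h
            simp only [Set.mem_setOf_eq, List.mem_cons] at hb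
            rcases hb with hb | hb
            · exact Or.inl (Or.inr (by simp [hb]))
            · exact Or.inr ⟨b, hb, rfl⟩
        · exact htail
      · have hBM : B = M := by
          refine le_antisymm hB ?_
          intro x hx
          rcases hcov hx with h | h
          · exact h
          · obtain ⟨b, hb, rfl⟩ := h
            simp only [Set.mem_setOf_eq, List.mem_cons] at hb
            rcases hb with hb | hb
            · exact absurd (hb ▸ hx) hdM
            · exact absurd (hd b hb hx) hdM
        subst hBM
        have hnc : ¬ Consistent baseLang Rsym ι (B ∪ {form d}) := hmax d hdM
        rw [hstep]
        simp only [if_neg hnc]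
        exact ih B le_rfl (fun x hx => Or.inl hx) htail
  show (Finset.univ.sort (· ≤ · : ι → ι → Prop)).foldl step ∅ = M
  apply key
  · exact Set.empty_subset M
  · intro x hx
    rcases hsub hx with ⟨d, rfl⟩
    exact Or.inr ⟨d, by simp [Finset.mem_sort], rfl⟩
  · have hs := Finset.pairwise_sort (r := (· ≤ · : ι → ι → Prop)) (s := Finset.univ)
    refine hs.imp ?_
    intro a b hab hbM
    by_contra haM
    have hle : f a ≤ f b := hab
    rw [hfdef] at hle
    simp only [if_pos hbM, if_neg haM] at hle
    rcases Prod.Lex.le_iff.1 hle with h | ⟨h, _⟩ <;>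
      simp only [ofLex_toLex] at h <;> omega


end Brevis
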